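/- arXiv:2005.03147 — 2 statements merged into one kernel-verified Lean document; each statement's English description precedes it below -/
import Mathlib

section
/- Let f : (−δ₀, δ₀) → ℝ be the function f(x) = (3π/2 · F_SC(x² − 2))^{1/3} (extended appropriately near 0). Then the Taylor expansion of f at 0 begins f(x) = x − x³/40 − (39/22400)x⁵ + O(x⁷). -/
open Real Set Filter Asymptotics Topology

noncomputable def FSC (y : ℝ) : ℝ :=
  1 / 2 + (1 / π) * (y * Real.sqrt (4 - y ^ 2) / 4 + Real.arcsin (y / 2))

noncomputable def fRSK (x : ℝ) : ℝ := (3 * π / 2 * FSC (x ^ 2 - 2)) ^ ((1 : ℝ) / 3)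

noncomputable def Gfun (x : ℝ) : ℝ :=
  3 * Real.arcsin (x / 2) + 3 / 8 * x * (x ^ 2 - 2) * Real.sqrt (4 - x ^ 2)

lemma arcsin_double {x : ℝ} (hx0 : 0 ≤ x) (hx2 : x ≤ 2) :
    Real.arcsin (x ^ 2 / 2 - 1) = 2 * Real.arcsin (x / 2) - π / 2 := by
  set θ := Real.arcsin (x / 2) with hθ
  have h1 : -1 ≤ x / 2 := by linarith
  have h2 : x / 2 ≤ 1 := by linarith
  have hs : Real.sin θ = x / 2 := Real.sin_arcsin h1 h2
  have hθ0 : 0 ≤ θ := Real.arcsin_nonneg.2 (by linarith)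
  have hθπ : θ ≤ π / 2 := Real.arcsin_le_pi_div_two _
  have key : Real.sin (2 * θ - π / 2) = x ^ 2 / 2 - 1 := by
    rw [Real.sin_sub_pi_div_two, Real.cos_two_mul]
    have := Real.sin_sq_add_cos_sq θ
    nlinarith
  rw [← key, Real.arcsin_sin (by linarith) (by linarith)]

lemma FSC_eq {x : ℝ} (hx0 : 0 ≤ x) (hx2 : x ≤ 2) :
    3 * π / 2 * FSC (x ^ 2 - 2) = Gfun x := by
  have hπ : (π : ℝ) ≠ 0 := Real.pi_ne_zero
  have hsq : Real.sqrt (4 - (x ^ 2 - 2) ^ 2) = x * Real.sqrt (4 - x ^ 2) := by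
    rw [show 4 - (x ^ 2 - 2) ^ 2 = x ^ 2 * (4 - x ^ 2) by ring,
      Real.sqrt_mul (sq_nonneg x), Real.sqrt_sq hx0]
  have harc : Real.arcsin ((x ^ 2 - 2) / 2) = 2 * Real.arcsin (x / 2) - π / 2 := by
    rw [show (x ^ 2 - 2) / 2 = x ^ 2 / 2 - 1 by ring]
    exact arcsin_double hx0 hx2
  rw [FSC, hsq, harc, Gfun]
  field_simp
  ring

lemma Gfun_hasDerivAt {t : ℝ} (h0 : 0 ≤ t) (h1 : t ≤ 1) :
    HasDerivAt Gfun (3 / 2 * t ^ 2 * Real.sqrt (4 - t ^ 2)) t := by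
  have h4 : (0:ℝ) < 4 - t ^ 2 := by nlinarith
  have hs_pos : 0 < Real.sqrt (4 - t ^ 2) := Real.sqrt_pos.2 h4
  have hs_sq : Real.sqrt (4 - t ^ 2) ^ 2 = 4 - t ^ 2 := Real.sq_sqrt h4.le
  have hinner : HasDerivAt (fun y : ℝ => y / 2) (1 / 2) t := by
    simpa using (hasDerivAt_id t).div_const 2
  have h₁ : t / 2 ≠ -1 := by intro h; nlinarith [h]
  have h₂ : t / 2 ≠ 1 := by intro h; nlinarith [h]
  have harc : HasDerivAt (fun y : ℝ => Real.arcsin (y / 2))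
      (1 / Real.sqrt (1 - (t / 2) ^ 2) * (1 / 2)) t :=
    by have := (Real.hasDerivAt_arcsin h₁ h₂).comp t hinner; exact this
  have hsqrt1 : Real.sqrt (1 - (t / 2) ^ 2) = Real.sqrt (4 - t ^ 2) / 2 := by
    rw [show 1 - (t / 2) ^ 2 = (4 - t ^ 2) / 4 by ring, Real.sqrt_div h4.le,
      show (4:ℝ) = 2 ^ 2 by norm_num, Real.sqrt_sq (by norm_num : (0:ℝ) ≤ 2)]
  have hin2 : HasDerivAt (fun y : ℝ => 4 - y ^ 2) (-(2 * t)) t := by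
    simpa using ((hasDerivAt_pow 2 t).const_sub 4)
  have hsq' : HasDerivAt (fun y : ℝ => Real.sqrt (4 - y ^ 2))
      (1 / (2 * Real.sqrt (4 - t ^ 2)) * (-(2 * t))) t :=
    (Real.hasDerivAt_sqrt h4.ne').comp t hin2
  have hpoly : HasDerivAt (fun y : ℝ => 3 / 8 * y * (y ^ 2 - 2))
      (3 / 8 * (3 * t ^ 2 - 2)) t := by
    have := (((hasDerivAt_id t).const_mul (3/8 : ℝ)).mul ((hasDerivAt_pow 2 t).sub_const 2))
    refine this.congr_deriv ?_
    simp only [id, Nat.cast_ofNat]; norm_num; ring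
  have hprod : HasDerivAt (fun y : ℝ => 3 / 8 * y * (y ^ 2 - 2) * Real.sqrt (4 - y ^ 2))
      (3 / 8 * (3 * t ^ 2 - 2) * Real.sqrt (4 - t ^ 2)
        + 3 / 8 * t * (t ^ 2 - 2) * (1 / (2 * Real.sqrt (4 - t ^ 2)) * (-(2 * t)))) t :=
    hpoly.mul hsq'
  have htotal := (harc.const_mul 3).add hprod
  have : HasDerivAt Gfun
      (3 * (1 / Real.sqrt (1 - (t / 2) ^ 2) * (1 / 2))
        + (3 / 8 * (3 * t ^ 2 - 2) * Real.sqrt (4 - t ^ 2)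
        + 3 / 8 * t * (t ^ 2 - 2) * (1 / (2 * Real.sqrt (4 - t ^ 2)) * (-(2 * t))))) t := htotal
  convert this using 1
  rw [hsqrt1]
  field_simp
  ring_nf
  linear_combination (2*t^2+4) * hs_sq

noncomputable def qfun (t : ℝ) : ℝ := t ^ 3 - 3 * t ^ 5 / 40 - 3 * t ^ 7 / 896

noncomputable def sfun (t : ℝ) : ℝ := 2 - t ^ 2 / 4 - t ^ 4 / 64

lemma qfun_hasDerivAt (t : ℝ) : HasDerivAt qfun (3 / 2 * t ^ 2 * sfun t) t := by
  have h3 := hasDerivAt_pow 3 t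
  have h5 := (hasDerivAt_pow 5 t).const_mul (3:ℝ)
  have h7 := (hasDerivAt_pow 7 t).const_mul (3:ℝ)
  have := (h3.sub (h5.div_const 40)).sub (h7.div_const 896)
  refine this.congr_deriv ?_
  simp [sfun]; push_cast; ring

lemma sqrt_approx {t : ℝ} (h0 : 0 ≤ t) (h1 : t ≤ 1) :
    |Real.sqrt (4 - t ^ 2) - sfun t| ≤ t ^ 6 := by
  have h4 : (0:ℝ) ≤ 4 - t ^ 2 := by nlinarith
  have hs0 : 0 ≤ sfun t := by simp only [sfun]; nlinarith
  have hub : Real.sqrt (4 - t ^ 2) ≤ sfun t := by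
    calc Real.sqrt (4 - t ^ 2) ≤ Real.sqrt ((sfun t) ^ 2) := by
          apply Real.sqrt_le_sqrt; simp only [sfun]
          nlinarith [sq_nonneg (t ^ 3), sq_nonneg (t ^ 4)]
      _ = sfun t := Real.sqrt_sq hs0
  have hlb : sfun t - t ^ 6 ≤ Real.sqrt (4 - t ^ 2) := by
    have ht2 : t ^ 2 ≤ 1 := by nlinarith
    have ht4 : t ^ 4 ≤ 1 := by nlinarith
    have ht6 : t ^ 6 ≤ 1 := by nlinarith
    have ht8 : t ^ 8 ≤ t ^ 6 := by nlinarith [pow_nonneg h0 6]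
    have ht10 : t ^ 10 ≤ t ^ 6 := by nlinarith [pow_nonneg h0 6, pow_nonneg h0 4]
    have ht12 : t ^ 12 ≤ t ^ 6 := by nlinarith [pow_nonneg h0 6]
    have hnn : 0 ≤ sfun t - t ^ 6 := by simp only [sfun]; nlinarith
    calc sfun t - t ^ 6 = Real.sqrt ((sfun t - t ^ 6) ^ 2) := (Real.sqrt_sq hnn).symm
      _ ≤ Real.sqrt (4 - t ^ 2) := by
          apply Real.sqrt_le_sqrt; simp only [sfun]; nlinarith
  rw [abs_le]
  constructor <;> linarith

lemma G_sub_q_bound {x : ℝ} (h0 : 0 ≤ x) (h1 : x ≤ 1) :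
    |Gfun x - qfun x| ≤ 3 / 2 * x ^ 9 := by
  have hconv : Convex ℝ (Icc (0:ℝ) x) := convex_Icc 0 x
  have hderiv : ∀ t ∈ Icc (0:ℝ) x,
      HasDerivWithinAt (fun t => Gfun t - qfun t)
        (3 / 2 * t ^ 2 * (Real.sqrt (4 - t ^ 2) - sfun t)) (Icc (0:ℝ) x) t := by
    intro t ht
    have ht1 : t ≤ 1 := le_trans ht.2 h1
    have := (Gfun_hasDerivAt ht.1 ht1).sub (qfun_hasDerivAt t)
    have h2 : 3 / 2 * t ^ 2 * Real.sqrt (4 - t ^ 2) - 3 / 2 * t ^ 2 * sfun t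
        = 3 / 2 * t ^ 2 * (Real.sqrt (4 - t ^ 2) - sfun t) := by ring
    rw [h2] at this
    exact this.hasDerivWithinAt
  have hbound : ∀ t ∈ Icc (0:ℝ) x,
      ‖3 / 2 * t ^ 2 * (Real.sqrt (4 - t ^ 2) - sfun t)‖ ≤ 3 / 2 * x ^ 8 := by
    intro t ht
    have ht1 : t ≤ 1 := le_trans ht.2 h1
    have happ := sqrt_approx ht.1 ht1
    have htx : t ≤ x := ht.2
    rw [Real.norm_eq_abs, abs_mul, abs_of_nonneg (by positivity : (0:ℝ) ≤ 3 / 2 * t ^ 2)]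
    calc 3 / 2 * t ^ 2 * |Real.sqrt (4 - t ^ 2) - sfun t| ≤ 3 / 2 * t ^ 2 * t ^ 6 := by
          apply mul_le_mul_of_nonneg_left happ (by positivity)
      _ = 3 / 2 * t ^ 8 := by ring
      _ ≤ 3 / 2 * x ^ 8 := by
          have := pow_le_pow_left₀ ht.1 htx 8
          linarith
  have := hconv.norm_image_sub_le_of_norm_hasDerivWithin_le hderiv hbound
    (left_mem_Icc.2 h0) (right_mem_Icc.2 h0)
  have hG0 : Gfun 0 = 0 := by simp [Gfun]
  have hq0 : qfun 0 = 0 := by simp [qfun]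
  simp only [hG0, hq0, sub_self, sub_zero, Real.norm_eq_abs] at this
  rw [abs_of_nonneg h0] at this
  calc |Gfun x - qfun x| ≤ 3 / 2 * x ^ 8 * x := this
    _ = 3 / 2 * x ^ 9 := by ring

set_option maxHeartbeats 2000000 in
theorem fRSK_taylor :
    (fun x => fRSK x - (x - x ^ 3 / 40 - (39 / 22400) * x ^ 5))
      =O[𝓝[Set.Ici (0 : ℝ)] 0] fun x => x ^ 7 := by
  rw [isBigO_iff]
  refine ⟨8, ?_⟩
  have hmem : ∀ᶠ x in 𝓝[Set.Ici (0:ℝ)] 0, x ∈ Set.Ici (0:ℝ) := eventually_mem_nhdsWithin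
  have hsmall : ∀ᶠ x in 𝓝[Set.Ici (0:ℝ)] 0, |x| < 1/2 := by
    apply eventually_nhdsWithin_of_eventually_nhds
    have : Metric.ball (0:ℝ) (1/2) ∈ 𝓝 (0:ℝ) := Metric.ball_mem_nhds 0 (by norm_num)
    filter_upwards [this] with x hx
    simpa [Real.dist_eq] using hx
  filter_upwards [hmem, hsmall] with x hx0 hxhalf
  have hx0' : (0:ℝ) ≤ x := hx0
  have hxh : x < 1/2 := lt_of_le_of_lt (le_abs_self x) hxhalf
  have hx2 : x ≤ 2 := by linarith
  have hfG : fRSK x = (Gfun x) ^ ((1:ℝ)/3) := by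
    rw [fRSK, FSC_eq hx0' hx2]
  set p : ℝ := x - x ^ 3 / 40 - 39 / 22400 * x ^ 5 with hp
  rcases eq_or_lt_of_le hx0' with h0 | hxpos
  · -- x = 0
    have hx : x = 0 := h0.symm
    subst hx
    have : Gfun 0 = 0 := by simp [Gfun]
    rw [hfG, this, Real.zero_rpow (by norm_num : (1:ℝ)/3 ≠ 0)]
    simp [hp]
  · -- 0 < x
    have hGq := G_sub_q_bound hx0' (by linarith)
    have hx2le : x ^ 2 ≤ 1 / 4 := by nlinarith
    have hx4le : x ^ 4 ≤ 1 / 16 := by nlinarith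
    have hx6le : x ^ 6 ≤ 1 / 64 := by nlinarith
    have hx30 : 0 ≤ x ^ 3 := by positivity
    have h5' : x ^ 5 ≤ x ^ 3 / 4 := by nlinarith [mul_le_mul_of_nonneg_left hx2le hx30]
    have h7' : x ^ 7 ≤ x ^ 3 / 16 := by nlinarith [mul_le_mul_of_nonneg_left hx4le hx30]
    have h9' : x ^ 9 ≤ x ^ 3 / 64 := by nlinarith [mul_le_mul_of_nonneg_left hx6le hx30]
    have h3x : x ^ 3 ≤ x / 4 := by nlinarith [mul_le_mul_of_nonneg_left hx2le hx0']
    have h5x : x ^ 5 ≤ x / 16 := by nlinarith [mul_le_mul_of_nonneg_left hx4le hx0']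
    -- q - p^3 = x^9 * r
    have hqp : |qfun x - p ^ 3| ≤ 1/2 * x ^ 9 := by
      have hfac : qfun x - p ^ 3 = x ^ 9 *
          (-(11/44800) - 117/20070400 * x ^ 2 + 4563/20070400000 * x ^ 4
            + 59319/11239424000000 * x ^ 6) := by
        simp only [qfun, hp]; ring
      rw [hfac, abs_mul, abs_of_nonneg (by positivity : (0:ℝ) ≤ x ^ 9)]
      have : |(-(11/44800) - 117/20070400 * x ^ 2 + 4563/20070400000 * x ^ 4
            + 59319/11239424000000 * x ^ 6 : ℝ)| ≤ 1/2 := by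
        rw [abs_le]
        constructor <;> nlinarith [sq_nonneg x, pow_nonneg hx0' 4, pow_nonneg hx0' 6]
      calc x ^ 9 * |(-(11/44800) - 117/20070400 * x ^ 2 + 4563/20070400000 * x ^ 4
            + 59319/11239424000000 * x ^ 6 : ℝ)| ≤ x ^ 9 * (1/2) :=
            mul_le_mul_of_nonneg_left this (by positivity)
        _ = 1/2 * x ^ 9 := by ring
    have hGp : |Gfun x - p ^ 3| ≤ 2 * x ^ 9 := by
      calc |Gfun x - p ^ 3| = |(Gfun x - qfun x) + (qfun x - p ^ 3)| := by rw [sub_add_sub_cancel]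
        _ ≤ |Gfun x - qfun x| + |qfun x - p ^ 3| := abs_add_le _ _
        _ ≤ 2 * x ^ 9 := by linarith
    have hppos : x / 2 ≤ p := by rw [hp]; linarith
    have hG0 : 0 ≤ Gfun x := by
      have : qfun x - 3/2 * x ^ 9 ≤ Gfun x := by
        have := abs_le.1 hGq; linarith
      simp only [qfun] at this; linarith
    set A : ℝ := (Gfun x) ^ ((1:ℝ)/3) with hA
    have hA0 : 0 ≤ A := Real.rpow_nonneg hG0 _
    have hA3 : A ^ 3 = Gfun x := by
      rw [hA, ← Real.rpow_natCast ((Gfun x) ^ ((1:ℝ)/3)) 3, ← Real.rpow_mul hG0]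
      norm_num
    have hp0 : 0 ≤ p := le_trans (by positivity) hppos
    have h1 : 0 ≤ A ^ 2 := sq_nonneg A
    have h2 : 0 ≤ A * p := mul_nonneg hA0 hp0
    have hDge : x ^ 2 / 4 ≤ A ^ 2 + A * p + p ^ 2 := by nlinarith
    have hkey : (A - p) * (A ^ 2 + A * p + p ^ 2) = A ^ 3 - p ^ 3 := by ring
    have habs : |A - p| * (A ^ 2 + A * p + p ^ 2) = |A ^ 3 - p ^ 3| := by
      rw [← abs_of_nonneg (by nlinarith : (0:ℝ) ≤ A ^ 2 + A * p + p ^ 2), ← abs_mul, hkey]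
    have hfin : |A - p| * (x ^ 2 / 4) ≤ 2 * x ^ 9 := by
      calc |A - p| * (x ^ 2 / 4) ≤ |A - p| * (A ^ 2 + A * p + p ^ 2) :=
            mul_le_mul_of_nonneg_left hDge (abs_nonneg _)
        _ = |A ^ 3 - p ^ 3| := habs
        _ = |Gfun x - p ^ 3| := by rw [hA3]
        _ ≤ 2 * x ^ 9 := hGp
    rw [hfG, Real.norm_eq_abs, Real.norm_eq_abs]
    rw [abs_of_nonneg (by positivity : (0:ℝ) ≤ x ^ 7)]
    nlinarith [abs_nonneg (A - p), pow_pos hxpos 2, pow_pos hxpos 7]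
end

section
/- Suppose G : [a,b] → ℝ² is continuous and increasing with respect to the partial order ≺, and for each n, G_n : [a,b] → ℝ² is increasing with respect to ≺ and G_n(x) → G(x) in probability for each fixed x ∈ [a,b]. If A_n are [a,b]-valued random variables with A_n → A in probability for a constant A ∈ [a,b], then G_n(A_n) → G(A) in probability. -/
open MeasureTheory ProbabilityTheory Filter Topology

def prec (p q : ℝ × ℝ) : Prop := p.1 ≤ q.1 ∧ q.2 ≤ p.2

noncomputable def eucNorm (p : ℝ × ℝ) : ℝ := Real.sqrt (p.1 ^ 2 + p.2 ^ 2)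

lemma abs_fst_le_eucNorm (p : ℝ × ℝ) : |p.1| ≤ eucNorm p := by
  rw [eucNorm, ← Real.sqrt_sq_eq_abs]
  exact Real.sqrt_le_sqrt (by nlinarith [sq_nonneg p.2])

lemma abs_snd_le_eucNorm (p : ℝ × ℝ) : |p.2| ≤ eucNorm p := by
  rw [eucNorm, ← Real.sqrt_sq_eq_abs]
  exact Real.sqrt_le_sqrt (by nlinarith [sq_nonneg p.1])

lemma eucNorm_le_abs_add (p : ℝ × ℝ) : eucNorm p ≤ |p.1| + |p.2| := by
  rw [eucNorm]
  have h : p.1 ^ 2 + p.2 ^ 2 ≤ (|p.1| + |p.2|) ^ 2 := by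
    nlinarith [abs_nonneg p.1, abs_nonneg p.2, sq_abs p.1, sq_abs p.2]
  calc Real.sqrt (p.1 ^ 2 + p.2 ^ 2) ≤ Real.sqrt ((|p.1| + |p.2|) ^ 2) :=
        Real.sqrt_le_sqrt h
    _ = |p.1| + |p.2| := by
        rw [Real.sqrt_sq (by positivity)]

theorem monotone_sandwich_convergence_in_probability
    {Ω : Type*} [MeasureSpace Ω] (hP : IsProbabilityMeasure (ℙ : Measure Ω))
    (a b : ℝ) (hab : a ≤ b)
    (G : ℝ → ℝ × ℝ) (hGc : ContinuousOn G (Set.Icc a b))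
    (hGmono : ∀ x ∈ Set.Icc a b, ∀ y ∈ Set.Icc a b, x ≤ y → prec (G x) (G y))
    (Gn : ℕ → ℝ → Ω → ℝ × ℝ)
    (hGnmono : ∀ n ω, ∀ x ∈ Set.Icc a b, ∀ y ∈ Set.Icc a b, x ≤ y →
      prec (Gn n x ω) (Gn n y ω))
    (hGnconv : ∀ x ∈ Set.Icc a b, ∀ ε > (0 : ℝ),
      Tendsto (fun n => ℙ {ω | ε ≤ eucNorm (Gn n x ω - G x)}) atTop (𝓝 0))
    (A : ℝ) (hA : A ∈ Set.Icc a b)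
    (An : ℕ → Ω → ℝ) (hAn : ∀ n ω, An n ω ∈ Set.Icc a b)
    (hAconv : ∀ δ > (0 : ℝ),
      Tendsto (fun n => ℙ {ω | δ ≤ |An n ω - A|}) atTop (𝓝 0)) :
    ∀ ε > (0 : ℝ),
      Tendsto (fun n => ℙ {ω | ε ≤ eucNorm (Gn n (An n ω) ω - G A)}) atTop (𝓝 0) := by
  intro ε hε
  -- continuity of G at A within Icc a b
  have hcw : ContinuousWithinAt G (Set.Icc a b) A := hGc A hA
  rw [Metric.continuousWithinAt_iff] at hcw
  obtain ⟨δ, hδ, hδG⟩ := hcw (ε / 4) (by linarith)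
  set c := max a (A - δ / 2) with hc_def
  set d := min b (A + δ / 2) with hd_def
  have hcA : c ≤ A := max_le hA.1 (by linarith)
  have hAd : A ≤ d := le_min hA.2 (by linarith)
  have hc : c ∈ Set.Icc a b := ⟨le_max_left _ _, hcA.trans hA.2⟩
  have hd : d ∈ Set.Icc a b := ⟨hA.1.trans hAd, min_le_left _ _⟩
  have hcclose : dist c A < δ := by
    rw [Real.dist_eq, abs_sub_lt_iff]
    constructor
    · linarith
    · have : A - δ / 2 ≤ c := le_max_right _ _
      linarith
  have hdclose : dist d A < δ := by
    rw [Real.dist_eq, abs_sub_lt_iff]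
    have : d ≤ A + δ / 2 := min_le_right _ _
    constructor
    · linarith
    · linarith
  have hGcA : dist (G c) (G A) < ε / 4 := hδG hc hcclose
  have hGdA : dist (G d) (G A) < ε / 4 := hδG hd hdclose
  have hGcA1 : |(G c).1 - (G A).1| < ε / 4 := by
    rw [← Real.dist_eq]
    exact lt_of_le_of_lt (by rw [Prod.dist_eq]; exact le_max_left _ _) hGcA
  have hGcA2 : |(G c).2 - (G A).2| < ε / 4 := by
    rw [← Real.dist_eq]
    exact lt_of_le_of_lt (by rw [Prod.dist_eq]; exact le_max_right _ _) hGcA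
  have hGdA1 : |(G d).1 - (G A).1| < ε / 4 := by
    rw [← Real.dist_eq]
    exact lt_of_le_of_lt (by rw [Prod.dist_eq]; exact le_max_left _ _) hGdA
  have hGdA2 : |(G d).2 - (G A).2| < ε / 4 := by
    rw [← Real.dist_eq]
    exact lt_of_le_of_lt (by rw [Prod.dist_eq]; exact le_max_right _ _) hGdA
  -- the key set inclusion
  have hsub : ∀ n,
      {ω | ε ≤ eucNorm (Gn n (An n ω) ω - G A)} ⊆
        {ω | δ / 2 ≤ |An n ω - A|} ∪
        ({ω | ε / 4 ≤ eucNorm (Gn n c ω - G c)} ∪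
         {ω | ε / 4 ≤ eucNorm (Gn n d ω - G d)}) := by
    intro n ω hω
    simp only [Set.mem_setOf_eq] at hω
    by_contra hcon
    simp only [Set.mem_union, Set.mem_setOf_eq, not_or, not_le] at hcon
    obtain ⟨h1, h2, h3⟩ := hcon
    -- sandwich A_n between c and d
    have hcAn : c ≤ An n ω := by
      have := abs_sub_lt_iff.mp h1
      exact max_le (hAn n ω).1 (by linarith [this.2])
    have hAnd : An n ω ≤ d := by
      have := abs_sub_lt_iff.mp h1
      exact le_min (hAn n ω).2 (by linarith [this.1])
    have hpc := hGnmono n ω c hc (An n ω) (hAn n ω) hcAn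
    have hpd := hGnmono n ω (An n ω) (hAn n ω) d hd hAnd
    -- bounds on Gn at c and d
    have hc1 : |(Gn n c ω).1 - (G c).1| < ε / 4 := by
      have := (abs_fst_le_eucNorm (Gn n c ω - G c)).trans_lt h2
      simpa using this
    have hc2 : |(Gn n c ω).2 - (G c).2| < ε / 4 := by
      have := (abs_snd_le_eucNorm (Gn n c ω - G c)).trans_lt h2
      simpa using this
    have hd1 : |(Gn n d ω).1 - (G d).1| < ε / 4 := by
      have := (abs_fst_le_eucNorm (Gn n d ω - G d)).trans_lt h3
      simpa using this
    have hd2 : |(Gn n d ω).2 - (G d).2| < ε / 4 := by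
      have := (abs_snd_le_eucNorm (Gn n d ω - G d)).trans_lt h3
      simpa using this
    rw [abs_sub_lt_iff] at hc1 hc2 hd1 hd2 hGcA1 hGcA2 hGdA1 hGdA2
    obtain ⟨hpc1, hpc2⟩ := hpc
    obtain ⟨hpd1, hpd2⟩ := hpd
    -- componentwise bounds on Gn (An) - G A
    have key1 : |(Gn n (An n ω) ω).1 - (G A).1| < ε / 2 := by
      rw [abs_sub_lt_iff]
      constructor
      · linarith [hpd1, hd1.1, hGdA1.1]
      · linarith [hpc1, hc1.2, hGcA1.2]
    have key2 : |(Gn n (An n ω) ω).2 - (G A).2| < ε / 2 := by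
      rw [abs_sub_lt_iff]
      constructor
      · linarith [hpc2, hc2.1, hGcA2.1]
      · linarith [hpd2, hd2.2, hGdA2.2]
    have := eucNorm_le_abs_add (Gn n (An n ω) ω - G A)
    simp only [Prod.fst_sub, Prod.snd_sub] at this
    linarith
  -- probability bound
  have hbound : ∀ n, ℙ {ω | ε ≤ eucNorm (Gn n (An n ω) ω - G A)} ≤
      ℙ {ω | δ / 2 ≤ |An n ω - A|} +
      (ℙ {ω | ε / 4 ≤ eucNorm (Gn n c ω - G c)} +
       ℙ {ω | ε / 4 ≤ eucNorm (Gn n d ω - G d)}) := by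
    intro n
    refine (measure_mono (hsub n)).trans ?_
    exact (measure_union_le _ _).trans (add_le_add le_rfl (measure_union_le _ _))
  have h1 := hAconv (δ / 2) (by linarith)
  have h2 := hGnconv c hc (ε / 4) (by linarith)
  have h3 := hGnconv d hd (ε / 4) (by linarith)
  have hsum : Tendsto (fun n =>
      ℙ {ω | δ / 2 ≤ |An n ω - A|} +
      (ℙ {ω | ε / 4 ≤ eucNorm (Gn n c ω - G c)} +
       ℙ {ω | ε / 4 ≤ eucNorm (Gn n d ω - G d)})) atTop (𝓝 0) := by
    have := h1.add (h2.add h3)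
    simpa using this
  exact tendsto_of_tendsto_of_tendsto_of_le_of_le tendsto_const_nhds hsum
    (fun n => zero_le) hbound
end
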